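/- Let h : [0, ∞) → [0, ∞) be a nonnegative concave function and A(ℓ) = ∫₀^ℓ h(ℓ') dℓ'. Then the function ℓ ↦ h(ℓ)/√(A(ℓ)) is monotone nonincreasing on the set {ℓ > 0 : A(ℓ) > 0}. -/

import Mathlib

open MeasureTheory intervalIntegral

private lemma lin_int (c s x y : ℝ) :
    ∫ t in x..y, (c + s * t) = c * (y - x) + s * (y ^ 2 - x ^ 2) / 2 := by
  rw [intervalIntegral.integral_add (f := fun _ => c) (g := fun t => s * t) intervalIntegrable_const
      ((continuous_const.mul continuous_id' : Continuous (fun t : ℝ => s * t)).intervalIntegrable _ _),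
    intervalIntegral.integral_const_mul, integral_id, intervalIntegral.integral_const]
  simp [smul_eq_mul]
  ring

theorem stmt4 (h : ℝ → ℝ)
    (hnn : ∀ x, 0 ≤ x → 0 ≤ h x)
    (hconc : ConcaveOn ℝ (Set.Ici 0) h)
    (ℓ₁ ℓ₂ : ℝ) (h₁ : 0 < ℓ₁) (h₁₂ : ℓ₁ ≤ ℓ₂)
    (hA : 0 < ∫ t in (0:ℝ)..ℓ₁, h t) :
    h ℓ₂ / Real.sqrt (∫ t in (0:ℝ)..ℓ₂, h t) ≤ h ℓ₁ / Real.sqrt (∫ t in (0:ℝ)..ℓ₁, h t) := by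
  rcases eq_or_lt_of_le h₁₂ with rfl | hlt
  · exact le_refl _
  have h₂ : (0:ℝ) < ℓ₂ := h₁.trans hlt
  set a := h ℓ₁ with ha_def
  set b := h ℓ₂ with hb_def
  have ha0 : 0 ≤ a := hnn ℓ₁ h₁.le
  have hb0 : 0 ≤ b := hnn ℓ₂ h₂.le
  -- upper bound for h on (0, ℓ₂]
  set M : ℝ := b + max (b - h (ℓ₂ + 1)) 0 * ℓ₂ with hM_def
  have hub : ∀ t ∈ Set.Ioc (0:ℝ) ℓ₂, h t ≤ M := by
    intro t ht
    rcases eq_or_lt_of_le ht.2 with rfl | htl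
    · have : 0 ≤ max (b - h (t + 1)) 0 * t := by positivity
      rw [hM_def]; linarith [this, hb_def.le, hb_def.ge]
    · have hs := hconc.slope_anti_adjacent (x := t) (y := ℓ₂) (z := ℓ₂ + 1)
        (Set.mem_Ici.2 ht.1.le) (Set.mem_Ici.2 (by linarith)) htl (by linarith)
      simp only [add_sub_cancel_left, div_one] at hs
      -- hs : h (ℓ₂+1) - h ℓ₂ ≤ (h ℓ₂ - h t) / (ℓ₂ - t)
      have hd : (0:ℝ) < ℓ₂ - t := by linarith
      have h1 : (h (ℓ₂ + 1) - h ℓ₂) * (ℓ₂ - t) ≤ h ℓ₂ - h t := by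
        rw [← le_div_iff₀ hd]; exact hs
      have h2 : h t ≤ b + (b - h (ℓ₂ + 1)) * (ℓ₂ - t) := by
        rw [hb_def]; nlinarith
      have h3 : (b - h (ℓ₂ + 1)) * (ℓ₂ - t) ≤ max (b - h (ℓ₂ + 1)) 0 * ℓ₂ := by
        calc (b - h (ℓ₂ + 1)) * (ℓ₂ - t) ≤ max (b - h (ℓ₂ + 1)) 0 * (ℓ₂ - t) := by
              exact mul_le_mul_of_nonneg_right (le_max_left _ _) hd.le
          _ ≤ max (b - h (ℓ₂ + 1)) 0 * ℓ₂ := by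
              exact mul_le_mul_of_nonneg_left (by linarith [ht.1]) (le_max_right _ _)
      rw [hM_def]; linarith
  -- integrability
  have hcont : ContinuousOn h (Set.Ioi 0) := by
    have := hconc.continuousOn_interior
    rwa [interior_Ici] at this
  have hInt2 : IntegrableOn h (Set.Ioc 0 ℓ₂) := by
    refine ⟨(hcont.mono Set.Ioc_subset_Ioi_self).aestronglyMeasurable measurableSet_Ioc,
      HasFiniteIntegral.restrict_of_bounded (C := M) measure_Ioc_lt_top ?_⟩
    filter_upwards [ae_restrict_mem measurableSet_Ioc] with t ht
    rw [Real.norm_eq_abs, abs_of_nonneg (hnn t ht.1.le)]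
    exact hub t ht
  have hi02 : IntervalIntegrable h volume 0 ℓ₂ :=
    (intervalIntegrable_iff_integrableOn_Ioc_of_le h₂.le).2 hInt2
  have hi01 : IntervalIntegrable h volume 0 ℓ₁ :=
    (intervalIntegrable_iff_integrableOn_Ioc_of_le h₁.le).2
      (hInt2.mono_set (Set.Ioc_subset_Ioc_right h₁₂))
  have hi12 : IntervalIntegrable h volume ℓ₁ ℓ₂ :=
    (intervalIntegrable_iff_integrableOn_Ioc_of_le h₁₂).2
      (hInt2.mono_set (Set.Ioc_subset_Ioc_left h₁.le))
  set A₁ := ∫ t in (0:ℝ)..ℓ₁, h t with hA₁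
  set A₂ := ∫ t in (0:ℝ)..ℓ₂, h t with hA₂
  set Y := ∫ t in ℓ₁..ℓ₂, h t with hY
  have hadd : A₁ + Y = A₂ := intervalIntegral.integral_add_adjacent_intervals hi01 hi12
  have hYnn : 0 ≤ Y := intervalIntegral.integral_nonneg h₁₂ (fun t ht => hnn t (by linarith [ht.1]))
  have hA2pos : 0 < A₂ := by linarith
  have hs1 : 0 < Real.sqrt A₁ := Real.sqrt_pos.2 hA
  have hs2 : 0 < Real.sqrt A₂ := Real.sqrt_pos.2 hA2pos
  rcases le_or_gt b a with hba | hab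
  · exact div_le_div₀ ha0 hba hs1 (Real.sqrt_le_sqrt (by linarith))
  · -- main case : b > a
    set d : ℝ := ℓ₂ - ℓ₁ with hd_def
    have hd : 0 < d := by rw [hd_def]; linarith
    set s : ℝ := (b - a) / d with hs_def
    have hspos : 0 < s := div_pos (by linarith) hd
    have hbs : b = a + s * d := by rw [hs_def]; field_simp; ring
    -- pointwise bounds
    have hL1 : ∀ t ∈ Set.Icc (0:ℝ) ℓ₁, h t ≤ (a - s * ℓ₁) + s * t := by
      intro t ht
      rcases eq_or_lt_of_le ht.2 with rfl | htl
      · simp [ha_def]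
      · have hsl := hconc.slope_anti_adjacent (x := t) (y := ℓ₁) (z := ℓ₂)
          (Set.mem_Ici.2 ht.1) (Set.mem_Ici.2 h₂.le) htl hlt
        -- hsl : (h ℓ₂ - h ℓ₁)/(ℓ₂ - ℓ₁) ≤ (h ℓ₁ - h t)/(ℓ₁ - t)
        have hpos : (0:ℝ) < ℓ₁ - t := by linarith
        have : s ≤ (a - h t) / (ℓ₁ - t) := hsl
        have h1 : s * (ℓ₁ - t) ≤ a - h t := by rw [← le_div_iff₀ hpos]; exact this
        nlinarith
    have hL2 : ∀ t ∈ Set.Icc ℓ₁ ℓ₂, (a - s * ℓ₁) + s * t ≤ h t := by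
      intro t ht
      rcases eq_or_lt_of_le ht.1 with rfl | htl1
      · simp [ha_def]
      rcases eq_or_lt_of_le ht.2 with rfl | htl2
      · have : (a - s * ℓ₁) + s * t = b := by rw [hbs, hd_def]; ring
        linarith [this.le]
      · have hsl1 := hconc.slope_anti_adjacent (x := ℓ₁) (y := t) (z := ℓ₂)
          (Set.mem_Ici.2 h₁.le) (Set.mem_Ici.2 h₂.le) htl1 htl2
        -- hsl1 : (h ℓ₂ - h t)/(ℓ₂ - t) ≤ (h t - h ℓ₁)/(t - ℓ₁)
        have hp1 : (0:ℝ) < t - ℓ₁ := by linarith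
        have hp2 : (0:ℝ) < ℓ₂ - t := by linarith
        rw [div_le_div_iff₀ hp2 hp1] at hsl1
        -- (b - h t)(t - ℓ₁) ≤ (h t - a)(ℓ₂ - t)
        have key : a * (ℓ₂ - t) + b * (t - ℓ₁) ≤ h t * d := by
          rw [hd_def]; nlinarith
        have hsd : s * d = b - a := by rw [hs_def]; field_simp
        have e : d * ((a - s * ℓ₁) + s * t) = a * (ℓ₂ - t) + b * (t - ℓ₁) := by
          calc d * ((a - s * ℓ₁) + s * t) = a * d + (s * d) * (t - ℓ₁) := by ring
            _ = a * d + (b - a) * (t - ℓ₁) := by rw [hsd]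
            _ = a * (ℓ₂ - t) + b * (t - ℓ₁) := by rw [hd_def]; ring
        have hfin : d * ((a - s * ℓ₁) + s * t) ≤ d * h t := by
          rw [e]; linarith [key]
        exact le_of_mul_le_mul_left hfin hd
    -- integral bounds
    have hLint : ∀ x y : ℝ, IntervalIntegrable (fun t => (a - s * ℓ₁) + s * t) volume x y :=
      fun x y => (continuous_const.add (continuous_const.mul continuous_id)).intervalIntegrable x y
    have hI1 : A₁ ≤ (a - s * ℓ₁) * ℓ₁ + s * ℓ₁ ^ 2 / 2 := by
      have := intervalIntegral.integral_mono_on h₁.le hi01 (hLint 0 ℓ₁) hL1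
      rw [lin_int] at this
      simpa using this
    have hI2 : (a - s * ℓ₁) * (ℓ₂ - ℓ₁) + s * (ℓ₂ ^ 2 - ℓ₁ ^ 2) / 2 ≤ Y := by
      have := intervalIntegral.integral_mono_on h₁₂ (hLint ℓ₁ ℓ₂) hi12 hL2
      rw [lin_int] at this
      exact this
    -- key inequality : b² A₁ ≤ a² A₂
    have key : b ^ 2 * A₁ ≤ a ^ 2 * A₂ := by
      have hba2 : a ^ 2 ≤ b ^ 2 := by nlinarith
      have e1 : (b ^ 2 - a ^ 2) * A₁ ≤ (b ^ 2 - a ^ 2) * ((a - s * ℓ₁) * ℓ₁ + s * ℓ₁ ^ 2 / 2) :=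
        mul_le_mul_of_nonneg_left hI1 (by linarith)
      have e2 : a ^ 2 * ((a - s * ℓ₁) * (ℓ₂ - ℓ₁) + s * (ℓ₂ ^ 2 - ℓ₁ ^ 2) / 2) ≤ a ^ 2 * Y :=
        mul_le_mul_of_nonneg_left hI2 (by positivity)
      have hℓ₂ : ℓ₂ = ℓ₁ + d := by rw [hd_def]; ring
      have e3 : (b ^ 2 - a ^ 2) * ((a - s * ℓ₁) * ℓ₁ + s * ℓ₁ ^ 2 / 2)
          ≤ a ^ 2 * ((a - s * ℓ₁) * (ℓ₂ - ℓ₁) + s * (ℓ₂ ^ 2 - ℓ₁ ^ 2) / 2) := by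
        have eq1 : a ^ 2 * ((a - s * ℓ₁) * (ℓ₂ - ℓ₁) + s * (ℓ₂ ^ 2 - ℓ₁ ^ 2) / 2)
            - (b ^ 2 - a ^ 2) * ((a - s * ℓ₁) * ℓ₁ + s * ℓ₁ ^ 2 / 2)
            = (d * (2 * a + s * d) / 2) * (a - s * ℓ₁) ^ 2 := by
          rw [hbs, hℓ₂]; ring
        have hprod : 0 ≤ (d * (2 * a + s * d) / 2) * (a - s * ℓ₁) ^ 2 := by positivity
        linarith [eq1, hprod]
      have l3 : b ^ 2 * A₁ = (b ^ 2 - a ^ 2) * A₁ + a ^ 2 * A₁ := by ring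
      have l4 : a ^ 2 * A₂ = a ^ 2 * A₁ + a ^ 2 * Y := by rw [← hadd]; ring
      linarith [e1, e2, e3, l3, l4]
    rw [div_le_div_iff₀ hs2 hs1]
    have l1 : b * Real.sqrt A₁ = Real.sqrt (b ^ 2 * A₁) := by
      rw [Real.sqrt_mul (sq_nonneg b), Real.sqrt_sq hb0]
    have l2 : a * Real.sqrt A₂ = Real.sqrt (a ^ 2 * A₂) := by
      rw [Real.sqrt_mul (sq_nonneg a), Real.sqrt_sq ha0]
    rw [l1, l2]
    exact Real.sqrt_le_sqrt key
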